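/- Let $a < b$ be real numbers, $n > 0$, $m := \lceil n \rceil$ the least integer $\ge n$, and let $f : [a,b] \to \mathbb{R}$ be continuous. Then the function $J_a^{m-n}(J_a^n f)$ (which equals $J_a^m f$) is $m$-times differentiable on $[a,b]$ and its $m$-th derivative equals $f$ everywhere on $[a,b]$; that is, $D_a^n J_a^n f = f$ pointwise on $[a,b]$. (This is the fundamental theorem of fractional calculus: the Riemann–Liouville fractional differential operator of order $n$ inverts the Riemann–Liouville fractional integral operator of order $n$; the paper proves it on all of $D_{HK}$, and here it is stated for continuous $f$.) -/

import Mathlib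

open MeasureTheory Set

/-- The Riemann–Liouville fractional integral of order `n` based at `a`,
with `J_a^0` the identity operator. -/
noncomputable def rlInt (a n : ℝ) (h : ℝ → ℝ) : ℝ → ℝ :=
  if n = 0 then h else fun x => (1 / Real.Gamma n) * ∫ t in a..x, (x - t) ^ (n - 1) * h t

open Filter Topology intervalIntegral

lemma real_beta {u v : ℝ} (hu : 0 < u) (hv : 0 < v) :
    ∫ x in (0:ℝ)..1, x ^ (u-1) * (1-x) ^ (v-1) =
      Real.Gamma u * Real.Gamma v / Real.Gamma (u+v) := by
  have key := Complex.Gamma_mul_Gamma_eq_betaIntegral (s := (u:ℂ)) (t := (v:ℂ))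
    (by simpa using hu) (by simpa using hv)
  have hcoe : Complex.betaIntegral u v =
      ((∫ x in (0:ℝ)..1, x ^ (u-1) * (1-x) ^ (v-1) : ℝ) : ℂ) := by
    rw [Complex.betaIntegral, ← intervalIntegral.integral_ofReal]
    refine intervalIntegral.integral_congr_ae ?_
    filter_upwards [] with x hx
    rw [uIoc_of_le (by norm_num : (0:ℝ) ≤ 1)] at hx
    rw [Complex.ofReal_mul, Complex.ofReal_cpow hx.1.le, Complex.ofReal_cpow (by linarith [hx.2] : (0:ℝ) ≤ 1 - x)]
    push_cast
    ring
  have hΓ : Real.Gamma (u+v) ≠ 0 := (Real.Gamma_pos_of_pos (by linarith)).ne'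
  have : ((Real.Gamma u * Real.Gamma v : ℝ) : ℂ) =
      ((Real.Gamma (u+v) * ∫ x in (0:ℝ)..1, x ^ (u-1) * (1-x) ^ (v-1) : ℝ) : ℂ) := by
    push_cast
    rw [← Complex.Gamma_ofReal, ← Complex.Gamma_ofReal, ← Complex.Gamma_ofReal]
    rw [key, hcoe]
    push_cast
    ring
  have := Complex.ofReal_inj.mp this
  field_simp
  linarith [this]

lemma kernel_int {α β : ℝ} (hα : 0 < α) (hβ : 0 < β) {t x : ℝ} (htx : t < x) :
    ∫ s in t..x, (x - s) ^ (α-1) * (s - t) ^ (β-1) =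
      Real.Gamma α * Real.Gamma β / Real.Gamma (α+β) * (x - t) ^ (α+β-1) := by
  have hc0 : 0 < x - t := by linarith
  have hsub := intervalIntegral.smul_integral_comp_add_mul
    (f := fun s => (x - s) ^ (α-1) * (s - t) ^ (β-1)) (a := 0) (b := 1) (x - t) t
  simp only [mul_zero, add_zero, mul_one, add_sub_cancel] at hsub
  rw [← hsub]
  have hcongr : ∫ u in (0:ℝ)..1, (x - (t + (x-t)*u)) ^ (α-1) * ((t + (x-t)*u) - t) ^ (β-1)
      = ∫ u in (0:ℝ)..1, (x-t) ^ (α+β-2) * (u ^ (β-1) * (1-u) ^ (α-1)) := by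
    refine intervalIntegral.integral_congr_ae ?_
    filter_upwards [] with u hu
    rw [uIoc_of_le (by norm_num : (0:ℝ) ≤ 1)] at hu
    have h1 : x - (t + (x-t)*u) = (x-t) * (1-u) := by ring
    have h2 : (t + (x-t)*u) - t = (x-t) * u := by ring
    rw [h1, h2, Real.mul_rpow hc0.le (by linarith [hu.2]), Real.mul_rpow hc0.le hu.1.le]
    rw [show α + β - 2 = (α-1) + (β-1) by ring, Real.rpow_add hc0]
    ring
  rw [hcongr, intervalIntegral.integral_const_mul, real_beta hβ hα]
  rw [smul_eq_mul, show α + β - 1 = 1 + (α+β-2) by ring, Real.rpow_add hc0, Real.rpow_one]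
  rw [add_comm β α]
  ring

lemma kernel_intable {a x α : ℝ} (hα : 0 < α) :
    IntervalIntegrable (fun t => (x - t) ^ (α-1)) volume a x := by
  have h := (intervalIntegral.intervalIntegrable_rpow' (a := x - a) (b := x - x)
    (by linarith : (-1:ℝ) < α - 1)).comp_sub_left x
  simpa using h

lemma kernel_mul_intable {a x α : ℝ} (hα : 0 < α) (hax : a ≤ x) {f : ℝ → ℝ}
    (hf : ContinuousOn f (Icc a x)) :
    IntervalIntegrable (fun t => (x - t) ^ (α-1) * f t) volume a x :=
  (kernel_intable hα).mul_continuousOn (by rwa [uIcc_of_le hax])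

lemma kernel_val {a x α : ℝ} (hα : 0 < α) (hax : a ≤ x) :
    ∫ t in a..x, (x - t) ^ (α-1) = (x-a) ^ α / α := by
  have h := intervalIntegral.integral_comp_sub_left (a := a) (b := x)
    (fun u => u ^ (α-1)) x
  rw [sub_self] at h
  rw [h, integral_rpow (Or.inl (by linarith)),
    Real.zero_rpow (by linarith : (0:ℝ) < α - 1 + 1).ne', show α - 1 + 1 = α by ring]
  ring

lemma rl_cont {a b α : ℝ} (hab : a ≤ b) (hα : 0 < α) {f : ℝ → ℝ} (hf : Continuous f) :
    ContinuousOn (fun x => ∫ t in a..x, (x - t) ^ (α-1) * f t) (Icc a b) := by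
  obtain ⟨C, hC⟩ := isCompact_Icc.exists_bound_of_continuousOn (hf.continuousOn (s := Icc a b))
  have hC0 : 0 ≤ C := le_trans (norm_nonneg _) (hC a (left_mem_Icc.mpr hab))
  set μ := volume.restrict (Ioc 0 (b-a)) with hμ
  set F : ℝ → ℝ → ℝ := fun x u => (Ioc 0 (x-a)).indicator (fun u => u ^ (α-1) * f (x-u)) u
    with hF
  have hrep : ∀ x ∈ Icc a b, (∫ t in a..x, (x - t) ^ (α-1) * f t) = ∫ u, F x u ∂μ := by
    intro x hx
    have h1 := intervalIntegral.integral_comp_sub_left (a := a) (b := x)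
      (fun u => u ^ (α-1) * f (x - u)) x
    simp only [sub_sub_cancel, sub_self] at h1
    rw [h1, intervalIntegral.integral_of_le (by linarith [hx.1] : (0:ℝ) ≤ x - a), hμ,
      show Ioc (0:ℝ) (x-a) = Ioc 0 (b-a) ∩ Ioc 0 (x-a) by
        rw [Set.Ioc_inter_Ioc, max_self, min_eq_right (by linarith [hx.2] : x - a ≤ b - a)]]
    exact (setIntegral_indicator measurableSet_Ioc).symm
  have hmeas : Measurable (fun u : ℝ => u ^ (α-1)) := measurable_id.pow_const _
  have key : ∀ x₀ ∈ Icc a b,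
      Tendsto (fun x => ∫ u, F x u ∂μ) (𝓝[Icc a b] x₀) (𝓝 (∫ u, F x₀ u ∂μ)) := by
    intro x₀ hx₀
    apply MeasureTheory.tendsto_integral_filter_of_dominated_convergence (bound := fun u => u ^ (α-1) * C)
    · filter_upwards [eventually_mem_nhdsWithin] with x hx
      exact ((hmeas.mul (hf.measurable.comp (measurable_const.sub measurable_id))).indicator
        measurableSet_Ioc).aestronglyMeasurable
    · filter_upwards [eventually_mem_nhdsWithin] with x hx
      filter_upwards [ae_restrict_mem measurableSet_Ioc] with u hu
      by_cases hu2 : u ∈ Ioc 0 (x - a)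
      · rw [hF]; simp only [Set.indicator_of_mem hu2]
        rw [norm_mul, Real.norm_rpow_of_nonneg hu.1.le, Real.norm_of_nonneg hu.1.le]
        exact mul_le_mul_of_nonneg_left (hC _ ⟨by linarith [hu2.2], by linarith [hu.1, hx.2]⟩)
          (Real.rpow_nonneg hu.1.le _)
      · rw [hF]; simp only [Set.indicator_of_notMem hu2, norm_zero]
        exact mul_nonneg (Real.rpow_nonneg hu.1.le _) hC0
    · refine Integrable.mul_const ?_ C
      rw [hμ, ← IntegrableOn,
        ← intervalIntegrable_iff_integrableOn_Ioc_of_le (by linarith : (0:ℝ) ≤ b - a)]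
      exact intervalIntegral.intervalIntegrable_rpow' (by linarith)
    · have hsing : ∀ᵐ u ∂μ, u ≠ x₀ - a := by
        rw [ae_iff]
        refine measure_mono_null (t := {x₀ - a}) (fun u hu => ?_) ?_
        · simp only [mem_setOf_eq, not_not] at hu
          simpa using hu
        · rw [hμ, Measure.restrict_apply (measurableSet_singleton _)]
          exact measure_mono_null inter_subset_left (measure_singleton _)
      filter_upwards [hsing, ae_restrict_mem measurableSet_Ioc] with u hu1 hu2
      rcases lt_or_gt_of_ne hu1 with h | h
      · -- u < x₀ - a
        have hev : ∀ᶠ x in 𝓝[Icc a b] x₀, F x u = u ^ (α-1) * f (x - u) := by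
          filter_upwards [(eventually_gt_nhds (by linarith : a + u < x₀)).filter_mono
            nhdsWithin_le_nhds] with x hx
          rw [hF]
          simp only []
          rw [Set.indicator_of_mem (show u ∈ Ioc 0 (x - a) from ⟨hu2.1, by linarith⟩)]
        have hlim : Tendsto (fun x => u ^ (α-1) * f (x - u)) (𝓝[Icc a b] x₀)
            (𝓝 (u ^ (α-1) * f (x₀ - u))) :=
          ((continuous_const.mul (hf.comp (continuous_sub_right u))).tendsto x₀).mono_left
            nhdsWithin_le_nhds
        have hx₀eq : F x₀ u = u ^ (α-1) * f (x₀ - u) := by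
          rw [hF]
          exact Set.indicator_of_mem (show u ∈ Ioc 0 (x₀ - a) from ⟨hu2.1, le_of_lt h⟩) _
        rw [hx₀eq]
        exact Filter.Tendsto.congr' (hev.mono fun x hx => hx.symm) hlim
      · -- u > x₀ - a
        have hev : ∀ᶠ x in 𝓝[Icc a b] x₀, F x u = 0 := by
          filter_upwards [(eventually_lt_nhds (by linarith : x₀ < a + u)).filter_mono
            nhdsWithin_le_nhds] with x hx
          rw [hF]; exact Set.indicator_of_notMem (fun hmem => by
            have := hmem.2; exact absurd this (by linarith)) _
        have hx₀eq : F x₀ u = 0 :=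
          Set.indicator_of_notMem (fun hmem => absurd hmem.2 (by linarith)) _
        rw [hx₀eq]
        exact Filter.Tendsto.congr' (hev.mono fun x hx => hx.symm) tendsto_const_nhds
  intro x₀ hx₀
  have := (key x₀ hx₀).congr' (by
    filter_upwards [eventually_mem_nhdsWithin] with x hx
    exact (hrep x hx).symm)
  rw [ContinuousWithinAt, hrep x₀ hx₀]
  exact this

lemma rl_semigroup_raw {a x α β : ℝ} (hα : 0 < α) (hβ : 0 < β) {f : ℝ → ℝ}
    (hf : Continuous f) (hax : a ≤ x) :
    ∫ s in a..x, (x - s) ^ (α-1) * ∫ t in a..s, (s - t) ^ (β-1) * f t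
      = (Real.Gamma α * Real.Gamma β / Real.Gamma (α+β)) *
        ∫ t in a..x, (x - t) ^ (α+β-1) * f t := by
  rcases eq_or_lt_of_le hax with rfl | hax'
  · simp
  obtain ⟨C, hC⟩ := isCompact_Icc.exists_bound_of_continuousOn (hf.continuousOn (s := Icc a x))
  have hC0 : 0 ≤ C := le_trans (norm_nonneg _) (hC a (left_mem_Icc.mpr hax))
  set μ := volume.restrict (Ioc a x) with hμ
  set k : ℝ → ℝ → ℝ := fun s t => (x - s) ^ (α-1) * ((s - t) ^ (β-1) * f t) with hk
  set S : Set (ℝ × ℝ) := {p : ℝ × ℝ | p.2 < p.1} with hS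
  set F : ℝ → ℝ → ℝ := fun s t => S.indicator (fun p => k p.1 p.2) (s, t) with hF
  have hSm : MeasurableSet S := measurableSet_lt measurable_snd measurable_fst
  have hkm : Measurable (fun p : ℝ × ℝ => k p.1 p.2) :=
    ((measurable_const.sub measurable_fst).pow_const _).mul
      (((measurable_fst.sub measurable_snd).pow_const _).mul (hf.measurable.comp measurable_snd))
  have hFm : AEStronglyMeasurable (Function.uncurry F) (μ.prod μ) :=
    (hkm.indicator hSm).aestronglyMeasurable
  have hFslice : ∀ s, (fun t => F s t) = (Iio s).indicator (fun t => k s t) := by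
    intro s; funext t
    by_cases h : t < s <;>
      simp [hF, hS, Set.indicator_apply, h]
  have hFslice' : ∀ t, (fun s => F s t) = (Ioi t).indicator (fun s => k s t) := by
    intro t; funext s
    by_cases h : t < s <;>
      simp [hF, hS, Set.indicator_apply, h]
  have hIoo : ∀ s, s ≤ x → Iio s ∩ Ioc a x = Ioo a s := by
    intro s hs; ext t
    simp only [mem_inter_iff, mem_Iio, mem_Ioc, mem_Ioo]
    exact ⟨fun ⟨h1, h2, h3⟩ => ⟨h2, h1⟩, fun ⟨h1, h2⟩ => ⟨h2, h1, h2.le.trans hs⟩⟩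
  have hkint : ∀ s ∈ Ioc a x, IntegrableOn (fun t => k s t) (Ioo a s) volume := by
    intro s hs
    have h2 : IntervalIntegrable (fun t => (x-s)^(α-1) * ((s - t) ^ (β-1) * f t)) volume a s := by
      have := (kernel_mul_intable hβ hs.1.le
        (hf.continuousOn (s := Icc a s))).const_mul ((x-s)^(α-1))
      simpa [mul_assoc] using this
    exact ((intervalIntegrable_iff_integrableOn_Ioc_of_le hs.1.le).mp h2).mono_set
      Ioo_subset_Ioc_self
  have hFs : ∀ s ∈ Ioc a x, Integrable (fun t => F s t) μ := by
    intro s hs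
    rw [hFslice s, hμ, integrable_indicator_iff measurableSet_Iio, IntegrableOn,
      Measure.restrict_restrict measurableSet_Iio, hIoo s hs.2]
    exact hkint s hs
  have hnormval : ∀ s ∈ Ioc a x, ∫ t, ‖F s t‖ ∂μ ≤ (x-s)^(α-1) * (C * ((x-a)^β / β)) := by
    intro s hs
    have h1 : ∫ t, ‖F s t‖ ∂μ = ∫ t in Ioo a s, ‖k s t‖ := by
      simp only [fun t => congrFun (hFslice s) t]
      rw [hμ]
      simp only [norm_indicator_eq_indicator_norm]
      rw [setIntegral_indicator measurableSet_Iio, Set.inter_comm, hIoo s hs.2]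
    rw [h1]
    have hkern : IntegrableOn (fun t => (s - t)^(β-1)) (Ioo a s) volume :=
      ((intervalIntegrable_iff_integrableOn_Ioc_of_le hs.1.le).mp
        (kernel_intable hβ)).mono_set Ioo_subset_Ioc_self
    have h2 : ∫ t in Ioo a s, ‖k s t‖
        ≤ ∫ t in Ioo a s, ((x-s)^(α-1) * (s-t)^(β-1)) * C := by
      apply setIntegral_mono_on ((hkint s hs).norm) ?_ measurableSet_Ioo
      · intro t ht
        rw [hk]
        simp only [norm_mul]
        rw [Real.norm_of_nonneg (Real.rpow_nonneg (by linarith [hs.2] : (0:ℝ) ≤ x - s) _),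
          Real.norm_of_nonneg (Real.rpow_nonneg (by linarith [ht.2] : (0:ℝ) ≤ s - t) _),
          mul_assoc]
        refine mul_le_mul_of_nonneg_left (mul_le_mul_of_nonneg_left ?_ ?_) ?_
        · exact hC t ⟨ht.1.le, by linarith [ht.2, hs.2]⟩
        · exact Real.rpow_nonneg (by linarith [ht.2]) _
        · exact Real.rpow_nonneg (by linarith [hs.2]) _
      · exact (hkern.const_mul _).mul_const C
    refine h2.trans ?_
    have h3 : ∫ t in Ioo a s, ((x-s)^(α-1) * (s-t)^(β-1)) * C
        = (x-s)^(α-1) * (C * ((s-a)^β / β)) := by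
      rw [MeasureTheory.integral_mul_const]
      rw [MeasureTheory.integral_const_mul, ← integral_Ioc_eq_integral_Ioo,
        ← intervalIntegral.integral_of_le hs.1.le, kernel_val hβ hs.1.le]
      ring
    rw [h3]
    have : (s-a)^β ≤ (x-a)^β :=
      Real.rpow_le_rpow (by linarith [hs.1]) (by linarith [hs.2]) hβ.le
    have hxs : (0:ℝ) ≤ (x-s)^(α-1) := Real.rpow_nonneg (by linarith [hs.2]) _
    apply mul_le_mul_of_nonneg_left _ hxs
    apply mul_le_mul_of_nonneg_left _ hC0
    exact (div_le_div_iff_of_pos_right hβ).mpr this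
  have hbound_int : Integrable (fun s => (x-s)^(α-1) * (C * ((x-a)^β / β))) μ := by
    rw [hμ, ← IntegrableOn, ← intervalIntegrable_iff_integrableOn_Ioc_of_le hax]
    exact (kernel_intable hα).mul_const _
  have hFint : Integrable (Function.uncurry F) (μ.prod μ) := by
    rw [MeasureTheory.integrable_prod_iff hFm]
    constructor
    · filter_upwards [ae_restrict_mem measurableSet_Ioc] with s hs
      exact hFs s hs
    · apply Integrable.mono' hbound_int hFm.norm.integral_prod_right'
      filter_upwards [ae_restrict_mem measurableSet_Ioc] with s hs
      rw [Real.norm_of_nonneg (integral_nonneg (fun t => norm_nonneg _))]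
      exact hnormval s hs
  have hswap := MeasureTheory.integral_integral_swap hFint
  have hLHS : ∫ s, (∫ t, F s t ∂μ) ∂μ
      = ∫ s in Ioc a x, ((x - s) ^ (α-1) * ∫ t in a..s, (s - t) ^ (β-1) * f t) := by
    have hinner : ∀ s ∈ Ioc a x,
        (∫ t, F s t ∂μ) = (x - s) ^ (α-1) * ∫ t in a..s, (s - t) ^ (β-1) * f t := by
      intro s hs
      have h1 : ∫ t, F s t ∂μ = ∫ t in Ioo a s, k s t := by
        rw [hFslice s, hμ, setIntegral_indicator measurableSet_Iio, Set.inter_comm, hIoo s hs.2]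
      rw [h1, intervalIntegral.integral_of_le hs.1.le, integral_Ioc_eq_integral_Ioo, hk,
        MeasureTheory.integral_const_mul]
    rw [hμ]
    exact setIntegral_congr_fun measurableSet_Ioc hinner
  have hRHS : ∫ t, (∫ s, F s t ∂μ) ∂μ
      = (Real.Gamma α * Real.Gamma β / Real.Gamma (α+β)) *
        ∫ t in a..x, (x - t) ^ (α+β-1) * f t := by
    have h0 : ∀ t ∈ Ioo a x, (∫ s, F s t ∂μ)
        = (Real.Gamma α * Real.Gamma β / Real.Gamma (α+β)) * ((x - t) ^ (α+β-1) * f t) := by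
      intro t ht
      have h1 : ∫ s, F s t ∂μ = ∫ s in Ioc t x, k s t := by
        rw [hFslice' t, hμ, setIntegral_indicator measurableSet_Ioi, Set.Ioc_inter_Ioi,
          max_eq_right ht.1.le]
      rw [h1, ← intervalIntegral.integral_of_le ht.2.le]
      have h2 : ∀ s, k s t = ((x - s) ^ (α-1) * (s - t) ^ (β-1)) * f t := by
        intro s; rw [hk]; ring
      simp only [h2]
      rw [intervalIntegral.integral_mul_const, kernel_int hα hβ ht.2]
      ring
    rw [hμ]
    rw [integral_Ioc_eq_integral_Ioo,
      setIntegral_congr_fun measurableSet_Ioo h0, MeasureTheory.integral_const_mul,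
      intervalIntegral.integral_of_le hax, integral_Ioc_eq_integral_Ioo]
  rw [intervalIntegral.integral_of_le hax, ← hLHS, hswap, hRHS]

lemma rlInt_of_ne {a α : ℝ} (hα : α ≠ 0) (h : ℝ → ℝ) :
    rlInt a α h = fun x => (1 / Real.Gamma α) * ∫ t in a..x, (x - t) ^ (α - 1) * h t :=
  if_neg hα

lemma rlInt_zero' (a : ℝ) (h : ℝ → ℝ) : rlInt a 0 h = h := if_pos rfl

lemma rlInt_one (a : ℝ) (h : ℝ → ℝ) : rlInt a 1 h = fun x => ∫ t in a..x, h t := by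
  rw [rlInt_of_ne one_ne_zero]
  funext x
  simp [Real.Gamma_one, Real.rpow_zero]

lemma rlInt_contOn {a b α : ℝ} (hab : a ≤ b) (hα : 0 < α) {f : ℝ → ℝ} (hf : Continuous f) :
    ContinuousOn (rlInt a α f) (Icc a b) := by
  rw [rlInt_of_ne hα.ne']
  exact continuousOn_const.mul (rl_cont hab hα hf)

lemma rlInt_semigroup {a x α β : ℝ} (hα : 0 < α) (hβ : 0 < β) {f : ℝ → ℝ}
    (hf : Continuous f) (hax : a ≤ x) :
    rlInt a α (rlInt a β f) x = rlInt a (α+β) f x := by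
  have hΓα := (Real.Gamma_pos_of_pos hα).ne'
  have hΓβ := (Real.Gamma_pos_of_pos hβ).ne'
  have hΓαβ := (Real.Gamma_pos_of_pos (by linarith : 0 < α + β)).ne'
  simp only [rlInt_of_ne hα.ne', rlInt_of_ne (by positivity : (0:ℝ) < α+β).ne',
    rlInt_of_ne hβ.ne']
  have hcomm : ∀ s : ℝ, (x - s)^(α-1) * ((1/Real.Gamma β) * ∫ t in a..s, (s-t)^(β-1) * f t)
      = (1/Real.Gamma β) * ((x - s)^(α-1) * ∫ t in a..s, (s-t)^(β-1) * f t) := fun s => by ring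
  simp only [hcomm]
  rw [intervalIntegral.integral_const_mul, rl_semigroup_raw hα hβ hf hax]
  field_simp

lemma rlInt_hasDeriv {a b : ℝ} (hab : a ≤ b) {g : ℝ → ℝ} (hg : Continuous g) (j : ℕ)
    {x : ℝ} (hx : x ∈ Icc a b) :
    HasDerivWithinAt (rlInt a ((j+1 : ℕ) : ℝ) g) (rlInt a ((j : ℕ) : ℝ) g x) (Icc a b) x := by
  have hcont : ContinuousOn (rlInt a ((j : ℕ) : ℝ) g) (Icc a b) := by
    rcases Nat.eq_zero_or_pos j with hj | hj
    · subst hj; rw [Nat.cast_zero, rlInt_zero']; exact hg.continuousOn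
    · exact rlInt_contOn hab (by exact_mod_cast hj) hg
  have hEq : EqOn (rlInt a ((j+1 : ℕ) : ℝ) g)
      (fun y => ∫ t in a..y, rlInt a ((j : ℕ) : ℝ) g t) (Icc a b) := by
    intro y hy
    rcases Nat.eq_zero_or_pos j with hj | hj
    · subst hj
      rw [show ((0+1 : ℕ) : ℝ) = 1 by norm_num, rlInt_one]
      simp only [Nat.cast_zero, rlInt_zero']
    · have hj' : (0:ℝ) < (j : ℕ) := by exact_mod_cast hj
      rw [show ((j+1 : ℕ) : ℝ) = 1 + ((j : ℕ) : ℝ) by push_cast; ring,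
        ← rlInt_semigroup one_pos hj' hg hy.1, rlInt_one]
  have hFTC : HasDerivWithinAt (fun y => ∫ t in a..y, rlInt a ((j : ℕ) : ℝ) g t)
      (rlInt a ((j : ℕ) : ℝ) g x) (Icc a b) x := by
    haveI : Fact (x ∈ Icc a b) := ⟨hx⟩
    refine intervalIntegral.integral_hasDerivWithinAt_right ?_ ?_ (hcont x hx)
    · apply ContinuousOn.intervalIntegrable
      apply hcont.mono
      rw [uIcc_of_le hx.1]
      exact Icc_subset_Icc le_rfl hx.2
    · exact ⟨Icc a b, self_mem_nhdsWithin, hcont.aestronglyMeasurable measurableSet_Icc⟩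
  exact hFTC.congr hEq (hEq hx)

lemma iter_eq {a b : ℝ} (hab : a < b) {g : ℝ → ℝ} (hg : Continuous g) {m : ℕ} {H : ℝ → ℝ}
    (hH : EqOn H (rlInt a (m : ℝ) g) (Icc a b)) :
    ∀ k, k ≤ m → ∀ x ∈ Icc a b,
      iteratedDerivWithin k H (Icc a b) x = rlInt a ((m - k : ℕ) : ℝ) g x := by
  intro k
  induction k with
  | zero =>
    intro _ x hx
    simpa using hH hx
  | succ k IH =>
    intro hk x hx
    have hk' : k ≤ m := Nat.le_of_succ_le hk
    have hud : UniqueDiffOn ℝ (Icc a b) := uniqueDiffOn_Icc hab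
    rw [iteratedDerivWithin_succ,
      derivWithin_congr (fun y hy => IH hk' y hy) (IH hk' x hx)]
    have hd := rlInt_hasDeriv hab.le hg (m - (k+1)) hx
    rw [show (m - (k+1)) + 1 = m - k from by omega] at hd
    exact hd.derivWithin (hud x hx)

theorem fundamental_theorem_of_fractional_calculus (a b n : ℝ) (hab : a < b) (hn : 0 < n)
    (f : ℝ → ℝ) (hf : ContinuousOn f (Icc a b)) :
    (∀ x ∈ Icc a b,
      rlInt a ((⌈n⌉₊ : ℝ) - n) (rlInt a n f) x = rlInt a (⌈n⌉₊ : ℝ) f x) ∧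
    (∀ k < ⌈n⌉₊, ∀ x ∈ Icc a b,
      DifferentiableWithinAt ℝ
        (iteratedDerivWithin k (rlInt a ((⌈n⌉₊ : ℝ) - n) (rlInt a n f)) (Icc a b))
        (Icc a b) x) ∧
    ∀ x ∈ Icc a b,
      iteratedDerivWithin ⌈n⌉₊ (rlInt a ((⌈n⌉₊ : ℝ) - n) (rlInt a n f)) (Icc a b) x = f x := by
  set m := ⌈n⌉₊ with hm
  have hnm : n ≤ (m : ℝ) := Nat.le_ceil n
  set g : ℝ → ℝ := fun y => f (max a (min y b)) with hgdef
  have hgc : Continuous g := by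
    apply hf.comp_continuous
    · exact continuous_const.max (continuous_id.min continuous_const)
    · intro y
      exact ⟨le_max_left _ _, max_le hab.le (min_le_right _ _)⟩
  have hfg : EqOn f g (Icc a b) := by
    intro y hy
    rw [hgdef]
    simp only [min_eq_left hy.2, max_eq_right hy.1]
  have hrlcongr : ∀ (α : ℝ), ∀ x ∈ Icc a b, rlInt a α f x = rlInt a α g x := by
    intro α x hx
    by_cases hα : α = 0
    · subst hα; rw [rlInt_zero', rlInt_zero']; exact hfg hx
    · simp only [rlInt_of_ne hα]
      congr 1
      apply intervalIntegral.integral_congr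
      intro t ht
      rw [uIcc_of_le hx.1] at ht
      show (x - t) ^ (α - 1) * f t = (x - t) ^ (α - 1) * g t
      rw [hfg ⟨ht.1, ht.2.trans hx.2⟩]
  have hG : EqOn (rlInt a ((m:ℝ) - n) (rlInt a n f)) (rlInt a (m:ℝ) g) (Icc a b) := by
    intro y hy
    by_cases hmn : (m:ℝ) - n = 0
    · rw [hmn, rlInt_zero', hrlcongr n y hy, show n = (m:ℝ) by linarith]
    · have hmn' : 0 < (m:ℝ) - n := lt_of_le_of_ne (by linarith) (Ne.symm hmn)
      have step1 : rlInt a ((m:ℝ)-n) (rlInt a n f) y = rlInt a ((m:ℝ)-n) (rlInt a n g) y := by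
        simp only [rlInt_of_ne hmn]
        congr 1
        apply intervalIntegral.integral_congr
        intro t ht
        rw [uIcc_of_le hy.1] at ht
        show (y - t) ^ ((m:ℝ) - n - 1) * rlInt a n f t = (y - t) ^ ((m:ℝ) - n - 1) * rlInt a n g t
        rw [hrlcongr n t ⟨ht.1, ht.2.trans hy.2⟩]
      rw [step1, rlInt_semigroup hmn' hn hgc hy.1, sub_add_cancel]
  have hiter := iter_eq hab hgc (m := m) hG
  refine ⟨?_, ?_, ?_⟩
  · intro x hx
    rw [hG hx, hrlcongr (m:ℝ) x hx]
  · intro k hk x hx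
    have heq : EqOn (iteratedDerivWithin k (rlInt a ((m:ℝ) - n) (rlInt a n f)) (Icc a b))
        (rlInt a ((m - k : ℕ) : ℝ) g) (Icc a b) := fun y hy => hiter k hk.le y hy
    have hd := rlInt_hasDeriv hab.le hgc (m - (k+1)) hx
    rw [show (m - (k+1)) + 1 = m - k from by omega] at hd
    exact hd.differentiableWithinAt.congr heq (heq hx)
  · intro x hx
    rw [hiter m le_rfl x hx, Nat.sub_self, Nat.cast_zero, rlInt_zero']
    exact (hfg hx).symm
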